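/- Suppose f₁,…,f_n : ℝ^N → ℝ are convex differentiable with ∑ᵢ ∇fᵢ(z*) = 0, and L_P, L_I are Laplacians of a connected undirected graph. If along a trajectory x(t) of the closed-loop system [ẋ; ξ̇] = -[[L̄_P, -L̄_I],[L̄_I, 0]][x;ξ] - α[I;0]φ(x) (with φ(x) the stacked gradients ∇fᵢ(xᵢ)), both xᵀL̄_P x ≡ 0 and ∑ᵢ (xᵢ - z*)ᵀ(∇fᵢ(xᵢ) - ∇fᵢ(z*)) ≡ 0 hold, then all xᵢ(t) are equal to a common vector c(t) and f(c(t)) = f(z*), i.e., c(t) is an optimal solution of min ∑ᵢ fᵢ. -/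

import Mathlib

open scoped RealInnerProductSpace


lemma grad_ineq {N : ℕ} {f : EuclideanSpace ℝ (Fin N) → ℝ}
    (hconv : ConvexOn ℝ Set.univ f) {g c : EuclideanSpace ℝ (Fin N)}
    (hg : HasGradientAt f g c) (z : EuclideanSpace ℝ (Fin N)) :
    f c + ⟪g, z - c⟫ ≤ f z := by
  set d := z - c with hd
  set φ : ℝ → ℝ := fun s => f (c + s • d) with hφ
  have hφconv : ConvexOn ℝ Set.univ φ := by
    refine ⟨convex_univ, fun a _ b _ la lb hla hlb hlab => ?_⟩
    have := hconv.2 (Set.mem_univ (c + a • d)) (Set.mem_univ (c + b • d)) hla hlb hlab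
    have heq : la • (c + a • d) + lb • (c + b • d) = c + (la * a + lb * b) • d := by
      have : la • (c + a • d) + lb • (c + b • d) = (la + lb) • c + (la * a + lb * b) • d := by
        module
      rw [this, hlab, one_smul]
    rw [heq] at this
    simpa [φ, smul_eq_mul] using this
  have hline : HasDerivAt (fun s : ℝ => c + s • d) d 0 := by
    simpa using ((hasDerivAt_id (0:ℝ)).smul_const d).const_add c
  have hderiv : HasDerivAt φ ⟪g, d⟫ 0 := by
    have hf := (hasGradientAt_iff_hasFDerivAt.mp hg)
    have : c = c + (0:ℝ) • d := by simp
    rw [this] at hf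
    have h' := hf.comp_hasDerivAt 0 hline
    simp at h'
    exact h'
  have hslope := hφconv.le_slope_of_hasDerivAt (Set.mem_univ (0:ℝ)) (Set.mem_univ (1:ℝ))
    one_pos hderiv
  have hs : slope φ 0 1 = φ 1 - φ 0 := by simp [slope_def_field]
  rw [hs] at hslope
  have hφ0 : φ 0 = f c := by simp [φ]
  have hφ1 : φ 1 = f z := by simp [φ, hd]
  rw [hφ0, hφ1] at hslope
  linarith


/-- LaSalle-type argument for the PI consensus-based distributed optimization
algorithm: along trajectories on which `xᵀ L̄_P x ≡ 0` and
`∑ᵢ (xᵢ - z*)ᵀ(∇fᵢ(xᵢ) - ∇fᵢ(z*)) ≡ 0`, all estimates coincide with a common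
vector `c(t)` which is an optimal solution of `min ∑ᵢ fᵢ`. -/
theorem lasalle_pi_consensus_optimal {n N : ℕ}
    (f : Fin n → EuclideanSpace ℝ (Fin N) → ℝ)
    (gradf : Fin n → EuclideanSpace ℝ (Fin N) → EuclideanSpace ℝ (Fin N))
    (hconv : ∀ i, ConvexOn ℝ Set.univ (f i))
    (hgrad : ∀ i x, HasGradientAt (f i) (gradf i x) x)
    (zstar : EuclideanSpace ℝ (Fin N))
    (hopt : ∑ i, gradf i zstar = 0)
    (hmin : ∀ z, (∑ i, f i zstar) ≤ ∑ i, f i z)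
    (LP LI : Matrix (Fin n) (Fin n) ℝ)
    (hPsymm : LP.IsSymm) (hPpsd : LP.PosSemidef)
    (hIsymm : LI.IsSymm) (hIpsd : LI.PosSemidef)
    -- connectivity of the graph underlying the Laplacian `L_P`:
    -- `vᵀ L̄_P v = 0` forces consensus of the blocks of `v`
    (hconn : ∀ v : Fin n → EuclideanSpace ℝ (Fin N),
      (∑ i, ⟪v i, ∑ j, LP i j • v j⟫) = 0 → ∀ i j, v i = v j)
    (α : ℝ) (hα : 0 < α)
    (x ξ : ℝ → Fin n → EuclideanSpace ℝ (Fin N))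
    (hdynx : ∀ t i, HasDerivAt (fun s => x s i)
      (-(∑ j, LP i j • x t j) + (∑ j, LI i j • ξ t j) - α • gradf i (x t i)) t)
    (hdynξ : ∀ t i, HasDerivAt (fun s => ξ s i) (-(∑ j, LI i j • x t j)) t)
    (hquad : ∀ t, (∑ i, ⟪x t i, ∑ j, LP i j • x t j⟫) = 0)
    (hincr : ∀ t, (∑ i, ⟪x t i - zstar, gradf i (x t i) - gradf i zstar⟫) = 0) :
    ∀ t, ∃ c : EuclideanSpace ℝ (Fin N),
      (∀ i, x t i = c) ∧ (∑ i, f i c) = ∑ i, f i zstar := by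
  intro t
  rcases Nat.eq_zero_or_pos n with hn | hn
  · subst hn
    exact ⟨0, fun i => absurd i.2 (by omega), by simp⟩
  have i0 : Fin n := ⟨0, hn⟩
  set c := x t i0 with hc
  have hcons : ∀ i, x t i = c := fun i => hconn _ (hquad t) i i0
  refine ⟨c, hcons, le_antisymm ?_ (hmin c)⟩
  -- from hincr: ⟪c - z*, ∑ gradf i c⟫ = 0
  have h1 : ⟪c - zstar, ∑ i, gradf i c⟫ = 0 := by
    have h := hincr t
    simp only [hcons] at h
    have : ∑ i, ⟪c - zstar, gradf i c - gradf i zstar⟫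
        = ⟪c - zstar, ∑ i, (gradf i c - gradf i zstar)⟫ := (inner_sum _ _ _).symm
    rw [this] at h
    rwa [Finset.sum_sub_distrib, hopt, sub_zero] at h
  have h2 : ∀ i, f i c + ⟪gradf i c, zstar - c⟫ ≤ f i zstar :=
    fun i => grad_ineq (hconv i) (hgrad i c) zstar
  have h3 : ∑ i, (f i c + ⟪gradf i c, zstar - c⟫) ≤ ∑ i, f i zstar :=
    Finset.sum_le_sum fun i _ => h2 i
  have h4 : ∑ i, ⟪gradf i c, zstar - c⟫ = 0 := by
    have : ∑ i, ⟪gradf i c, zstar - c⟫ = ⟪∑ i, gradf i c, zstar - c⟫ := (sum_inner _ _ _).symm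
    rw [this, real_inner_comm, show zstar - c = -(c - zstar) by abel, inner_neg_left, h1, neg_zero]
  rw [Finset.sum_add_distrib, h4, add_zero] at h3
  exact h3
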